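/- Under the assumptions of the lower-bound lemma (A has RIP constant δ of order K, and r_K + s_K/√K < 1/κ where r_K = ‖x_{K^c}‖₂/‖x_K‖₂, s_K = ‖x_{K^c}‖₁/‖x_K‖₂, κ = √(1+δ)/√(1-δ)), and if ‖Ev‖₂ ≤ ε^{(K)}·√(1+δ)·‖v‖₂ for all K-sparse v and ‖E‖ ≤ ε_A·‖A‖ (operator norms), then with b = Ax ≠ 0: ‖Ex‖₂/‖Ax‖₂ ≤ (ε^{(K)}·κ + ε_A·α·r_K) / (1 - κ·(r_K + s_K/√K)), where α = ‖A‖/√(1-δ). -/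

import Mathlib

open scoped BigOperators

/-- The Euclidean (ℓ₂) norm of a finitely indexed complex vector. -/
noncomputable def l2 {ι : Type*} [Fintype ι] (v : ι → ℂ) : ℝ :=
  Real.sqrt (∑ i, ‖v i‖ ^ 2)

/-- The ℓ₁ norm of a finitely indexed complex vector. -/
noncomputable def l1 {ι : Type*} [Fintype ι] (v : ι → ℂ) : ℝ :=
  ∑ i, ‖v i‖

/-- A vector is `K`-sparse if it has at most `K` nonzero entries. -/
def Sparse {n : ℕ} (K : ℕ) (x : Fin n → ℂ) : Prop :=
  ∃ s : Finset (Fin n), s.card ≤ K ∧ ∀ i ∉ s, x i = 0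

/-- `xK` is a best `K`-term approximation of `x`: it is `K`-sparse, agrees with `x`
on its support, and keeps the largest-magnitude entries. -/
def IsBestKApprox {n : ℕ} (K : ℕ) (x xK : Fin n → ℂ) : Prop :=
  Sparse K xK ∧ (∀ i, xK i ≠ 0 → xK i = x i) ∧
    (∀ i j, xK i ≠ 0 → xK j = 0 → ‖x j‖ ≤ ‖x i‖)


open Finset

namespace RMNB

variable {n : ℕ}

/-- restriction of a vector to a finset -/
noncomputable def res (s : Finset (Fin n)) (v : Fin n → ℂ) : Fin n → ℂ :=
  fun i => if i ∈ s then v i else 0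

/-- support as a finset -/
noncomputable def supp (v : Fin n → ℂ) : Finset (Fin n) := Finset.univ.filter (fun i => v i ≠ 0)

lemma mem_supp {v : Fin n → ℂ} {i : Fin n} : i ∈ supp v ↔ v i ≠ 0 := by
  simp [supp]

lemma l2_nonneg (v : Fin n → ℂ) : 0 ≤ l2 v := Real.sqrt_nonneg _

lemma l1_nonneg (v : Fin n → ℂ) : 0 ≤ l1 v :=
  Finset.sum_nonneg (fun i _ => norm_nonneg _)

lemma sq_l2 (v : Fin n → ℂ) : l2 v ^ 2 = ∑ i, ‖v i‖ ^ 2 :=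
  Real.sq_sqrt (Finset.sum_nonneg (fun i _ => sq_nonneg _))

lemma l2_eq_norm (v : Fin n → ℂ) :
    l2 v = ‖(WithLp.equiv 2 (Fin n → ℂ)).symm v‖ := by
  rw [EuclideanSpace.norm_eq]; rfl

lemma l2_add_le (a b : Fin n → ℂ) : l2 (a + b) ≤ l2 a + l2 b := by
  have := norm_add_le ((WithLp.equiv 2 (Fin n → ℂ)).symm a)
    ((WithLp.equiv 2 (Fin n → ℂ)).symm b)
  simpa [l2_eq_norm] using this

lemma l2_neg (a : Fin n → ℂ) : l2 (-a) = l2 a := by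
  simp [l2]

lemma l2_pos {v : Fin n → ℂ} (hv : v ≠ 0) : 0 < l2 v := by
  rw [l2_eq_norm]
  rw [norm_pos_iff]
  intro h
  apply hv
  funext i
  have := congrArg (fun w => (WithLp.equiv 2 (Fin n → ℂ)) w i) h
  simpa using this


lemma sum_sq_res (s : Finset (Fin n)) (v : Fin n → ℂ) :
    ∑ i, ‖res s v i‖ ^ 2 = ∑ i ∈ s, ‖v i‖ ^ 2 := by
  rw [← Finset.sum_filter_add_sum_filter_not Finset.univ (fun i => i ∈ s)]
  have h1 : ∑ i ∈ Finset.univ.filter (fun i => i ∈ s), ‖res s v i‖ ^ 2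
      = ∑ i ∈ s, ‖v i‖ ^ 2 := by
    rw [Finset.filter_mem_eq_inter, Finset.univ_inter]
    exact Finset.sum_congr rfl (fun i hi => by simp [res, hi])
  have h2 : ∑ i ∈ Finset.univ.filter (fun i => i ∉ s), ‖res s v i‖ ^ 2 = 0 := by
    apply Finset.sum_eq_zero
    intro i hi
    simp only [Finset.mem_filter] at hi
    simp [res, hi.2]
  rw [h1, h2, add_zero]

lemma l2_res_le_card (s : Finset (Fin n)) (v : Fin n → ℂ) (M : ℝ) (hM : 0 ≤ M)
    (h : ∀ i ∈ s, ‖v i‖ ≤ M) :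
    l2 (res s v) ≤ Real.sqrt s.card * M := by
  have h1 : ∑ i, ‖res s v i‖ ^ 2 ≤ (s.card : ℝ) * M ^ 2 := by
    rw [sum_sq_res]
    calc ∑ i ∈ s, ‖v i‖ ^ 2 ≤ ∑ _i ∈ s, M ^ 2 :=
          Finset.sum_le_sum (fun i hi => by
            have := h i hi
            nlinarith [norm_nonneg (v i)])
      _ = (s.card : ℝ) * M ^ 2 := by rw [Finset.sum_const, nsmul_eq_mul]
  calc l2 (res s v) ≤ Real.sqrt ((s.card : ℝ) * M ^ 2) := Real.sqrt_le_sqrt h1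
    _ = Real.sqrt s.card * M := by
        rw [Real.sqrt_mul (Nat.cast_nonneg _), Real.sqrt_sq hM]

lemma l2_res_le (s : Finset (Fin n)) (v : Fin n → ℂ) : l2 (res s v) ≤ l2 v := by
  apply Real.sqrt_le_sqrt
  rw [sum_sq_res]
  exact Finset.sum_le_sum_of_subset_of_nonneg (Finset.subset_univ s)
    (fun i _ _ => sq_nonneg _)

lemma l1_res (s : Finset (Fin n)) (v : Fin n → ℂ) :
    l1 (res s v) = ∑ i ∈ s, ‖v i‖ := by
  unfold l1
  rw [← Finset.sum_filter_add_sum_filter_not Finset.univ (fun i => i ∈ s)]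
  have h2 : ∑ i ∈ Finset.univ.filter (fun i => i ∉ s), ‖res s v i‖ = 0 := by
    apply Finset.sum_eq_zero
    intro i hi
    simp only [Finset.mem_filter] at hi
    simp [res, hi.2]
  rw [h2, add_zero, Finset.filter_mem_eq_inter, Finset.univ_inter]
  exact Finset.sum_congr rfl (fun i hi => by simp [res, hi])

lemma l1_split (s : Finset (Fin n)) (v : Fin n → ℂ) :
    l1 v = l1 (res s v) + l1 (v - res s v) := by
  unfold l1
  rw [← Finset.sum_add_distrib]
  apply Finset.sum_congr rfl
  intro i _
  by_cases hi : i ∈ s <;> simp [res, hi]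

lemma sparse_res (s : Finset (Fin n)) (v : Fin n → ℂ) {K : ℕ} (h : s.card ≤ K) :
    Sparse K (res s v) :=
  ⟨s, h, fun i hi => by simp [res, hi]⟩

lemma sparse_of_supp {v : Fin n → ℂ} {K : ℕ} (h : (supp v).card ≤ K) : Sparse K v :=
  ⟨supp v, h, fun i hi => by simpa [mem_supp, not_not] using hi⟩

lemma exists_top (f : Fin n → ℝ) (t : Finset (Fin n)) (k : ℕ) (hk : k ≤ t.card) :
    ∃ s, s ⊆ t ∧ s.card = k ∧ ∀ i ∈ s, ∀ j ∈ t, j ∉ s → f j ≤ f i := by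
  induction k with
  | zero => exact ⟨∅, Finset.empty_subset t, rfl, by simp⟩
  | succ k ih =>
    obtain ⟨s, hst, hcard, hmax⟩ := ih (le_trans (Nat.le_succ k) hk)
    have hne : (t \ s).Nonempty := by
      rw [← Finset.card_pos, Finset.card_sdiff_of_subset hst, hcard]
      omega
    obtain ⟨j₀, hj₀, hj₀max⟩ := Finset.exists_max_image (t \ s) f hne
    have hj₀s : j₀ ∉ s := (Finset.mem_sdiff.mp hj₀).2
    refine ⟨insert j₀ s, ?_, ?_, ?_⟩
    · exact Finset.insert_subset (Finset.mem_sdiff.mp hj₀).1 hst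
    · rw [Finset.card_insert_of_notMem hj₀s, hcard]
    · intro i hi j hj hjs
      have hjs' : j ∉ s := fun h => hjs (Finset.mem_insert_of_mem h)
      have hjne : j ≠ j₀ := fun h => hjs (h ▸ Finset.mem_insert_self _ _)
      rcases Finset.mem_insert.mp hi with rfl | hi'
      · exact hj₀max j (Finset.mem_sdiff.mpr ⟨hj, hjs'⟩)
      · exact hmax i hi' j hj hjs'



section Core

variable {m K : ℕ} {A : Matrix (Fin m) (Fin n) ℂ} {δ : ℝ}

lemma sparse_bound (hδ0 : 0 ≤ δ)
    (hRIP : ∀ v : Fin n → ℂ, Sparse K v →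
      (1 - δ) * l2 v ^ 2 ≤ l2 (A.mulVec v) ^ 2 ∧ l2 (A.mulVec v) ^ 2 ≤ (1 + δ) * l2 v ^ 2)
    (v : Fin n → ℂ) (hv : Sparse K v) :
    l2 (A.mulVec v) ≤ Real.sqrt (1 + δ) * l2 v := by
  have h := (hRIP v hv).2
  have h1 : l2 (A.mulVec v) = Real.sqrt (l2 (A.mulVec v) ^ 2) :=
    (Real.sqrt_sq (l2_nonneg _)).symm
  rw [h1]
  calc Real.sqrt (l2 (A.mulVec v) ^ 2) ≤ Real.sqrt ((1 + δ) * l2 v ^ 2) :=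
        Real.sqrt_le_sqrt h
    _ = Real.sqrt (1 + δ) * l2 v := by
        rw [Real.sqrt_mul (by linarith), Real.sqrt_sq (l2_nonneg _)]

lemma supp_sub_res (s : Finset (Fin n)) (v : Fin n → ℂ) :
    supp (v - res s v) ⊆ supp v \ s := by
  intro i hi
  rw [mem_supp] at hi
  rw [Finset.mem_sdiff, mem_supp]
  by_cases his : i ∈ s
  · exfalso; apply hi; simp [res, his]
  · constructor
    · intro h0; apply hi; simp [res, his, h0]
    · exact his

lemma res_sub_eq {s : Finset (Fin n)} {v : Fin n → ℂ} {i : Fin n} (his : i ∉ s) :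
    (v - res s v) i = v i := by simp [res, his]

lemma lemD (hK : 0 < K) (hδ0 : 0 ≤ δ)
    (hRIP : ∀ v : Fin n → ℂ, Sparse K v →
      (1 - δ) * l2 v ^ 2 ≤ l2 (A.mulVec v) ^ 2 ∧ l2 (A.mulVec v) ^ 2 ≤ (1 + δ) * l2 v ^ 2) :
    ∀ N : ℕ, ∀ v : Fin n → ℂ, (supp v).card ≤ N → ∀ M : ℝ, 0 ≤ M → (∀ i, ‖v i‖ ≤ M) →
      l2 (A.mulVec v) ≤
        Real.sqrt (1 + δ) * (Real.sqrt K * M + l1 v / Real.sqrt K) := by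
  intro N
  induction N using Nat.strong_induction_on with
  | _ N ih =>
  intro v hcard M hM0 hM
  have hsK : (0:ℝ) < Real.sqrt K := Real.sqrt_pos.mpr (by exact_mod_cast hK)
  have hsδ : (0:ℝ) ≤ Real.sqrt (1 + δ) := Real.sqrt_nonneg _
  by_cases h : (supp v).card ≤ K
  · -- sparse case
    have hsp : Sparse K v := sparse_of_supp h
    have hres : res (supp v) v = v := by
      funext i
      by_cases hi : i ∈ supp v
      · simp [res, hi]
      · rw [mem_supp, not_not] at hi; simp [res, hi]
    have h2 : l2 v ≤ Real.sqrt (supp v).card * M := by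
      have h2' := l2_res_le_card (supp v) v M hM0 (fun i _ => hM i)
      rw [hres] at h2'; exact h2'
    have h3 : Real.sqrt (supp v).card ≤ Real.sqrt K :=
      Real.sqrt_le_sqrt (by exact_mod_cast h)
    have h4 : l2 v ≤ Real.sqrt K * M := le_trans h2 (by nlinarith)
    calc l2 (A.mulVec v) ≤ Real.sqrt (1 + δ) * l2 v := sparse_bound hδ0 hRIP v hsp
      _ ≤ Real.sqrt (1 + δ) * (Real.sqrt K * M + l1 v / Real.sqrt K) := by
          have : (0:ℝ) ≤ l1 v / Real.sqrt K := div_nonneg (l1_nonneg v) hsK.le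
          nlinarith
  · push_neg at h
    obtain ⟨s, hst, hcards, hmax⟩ :=
      exists_top (fun i => ‖v i‖) (supp v) K h.le
    set v₀ := res s v with hv₀
    set v' := v - v₀ with hv'
    have hKpos : (0:ℝ) < K := by exact_mod_cast hK
    -- bound on entries of v'
    have hl1v₀ : l1 v₀ = ∑ i ∈ s, ‖v i‖ := l1_res s v
    set M' : ℝ := l1 v₀ / K with hM'
    have hM'0 : 0 ≤ M' := div_nonneg (l1_nonneg _) hKpos.le
    have hMv' : ∀ i, ‖v' i‖ ≤ M' := by
      intro i
      by_cases his : i ∈ s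
      · have : v' i = 0 := by simp [hv', hv₀, res, his]
        rw [this, norm_zero]; exact hM'0
      · have hvi : v' i = v i := by simp [hv', hv₀, res, his]
        rw [hvi]
        by_cases hiv : i ∈ supp v
        · have hle : ∀ j ∈ s, ‖v i‖ ≤ ‖v j‖ := fun j hj => hmax j hj i hiv his
          have : (K:ℝ) * ‖v i‖ ≤ l1 v₀ := by
            rw [hl1v₀]
            calc (K:ℝ) * ‖v i‖ = ∑ _j ∈ s, ‖v i‖ := by
                  rw [Finset.sum_const, hcards, nsmul_eq_mul]
              _ ≤ ∑ j ∈ s, ‖v j‖ := Finset.sum_le_sum hle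
          rw [hM', le_div_iff₀ hKpos]; linarith
        · rw [mem_supp, not_not] at hiv
          rw [hiv, norm_zero]; exact hM'0
    -- support of v' is smaller
    have hcard' : (supp v').card < N := by
      have h1 : supp v' ⊆ supp v \ s := supp_sub_res s v
      have h2 : (supp v').card ≤ (supp v).card - K := by
        calc (supp v').card ≤ (supp v \ s).card := Finset.card_le_card h1
          _ = (supp v).card - K := by rw [Finset.card_sdiff_of_subset hst, hcards]
      omega
    have ihv' := ih (supp v').card hcard' v' le_rfl M' hM'0 hMv'
    -- sparse bound on v₀
    have hv₀sp : Sparse K v₀ := sparse_res s v hcards.le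
    have hb0 : l2 (A.mulVec v₀) ≤ Real.sqrt (1 + δ) * (Real.sqrt K * M) := by
      calc l2 (A.mulVec v₀) ≤ Real.sqrt (1 + δ) * l2 v₀ := sparse_bound hδ0 hRIP v₀ hv₀sp
        _ ≤ Real.sqrt (1 + δ) * (Real.sqrt K * M) := by
            have := l2_res_le_card s v M hM0 (fun i _ => hM i)
            rw [hcards] at this
            nlinarith
    have hsplit : A.mulVec v = A.mulVec v₀ + A.mulVec v' := by
      rw [← Matrix.mulVec_add]
      congr 1
      funext i
      simp [hv']
    have htri : l2 (A.mulVec v) ≤ l2 (A.mulVec v₀) + l2 (A.mulVec v') := by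
      rw [hsplit]; exact l2_add_le _ _
    have hKM' : Real.sqrt K * M' = l1 v₀ / Real.sqrt K := by
      rw [hM', eq_div_iff hsK.ne']
      have hKK : Real.sqrt K * Real.sqrt K = (K:ℝ) := Real.mul_self_sqrt hKpos.le
      field_simp
      linear_combination l1 v₀ * hKK
    have hl1 : l1 v = l1 v₀ + l1 v' := l1_split s v
    calc l2 (A.mulVec v) ≤ l2 (A.mulVec v₀) + l2 (A.mulVec v') := htri
      _ ≤ Real.sqrt (1 + δ) * (Real.sqrt K * M) +
            Real.sqrt (1 + δ) * (Real.sqrt K * M' + l1 v' / Real.sqrt K) :=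
          add_le_add hb0 ihv'
      _ = Real.sqrt (1 + δ) * (Real.sqrt K * M + l1 v / Real.sqrt K) := by
          rw [hKM', hl1, add_div]; ring

lemma lemE (hK : 0 < K) (hδ0 : 0 ≤ δ)
    (hRIP : ∀ v : Fin n → ℂ, Sparse K v →
      (1 - δ) * l2 v ^ 2 ≤ l2 (A.mulVec v) ^ 2 ∧ l2 (A.mulVec v) ^ 2 ≤ (1 + δ) * l2 v ^ 2)
    (v : Fin n → ℂ) :
    l2 (A.mulVec v) ≤ Real.sqrt (1 + δ) * (l2 v + l1 v / Real.sqrt K) := by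
  have hsK : (0:ℝ) < Real.sqrt K := Real.sqrt_pos.mpr (by exact_mod_cast hK)
  have hsδ : (0:ℝ) ≤ Real.sqrt (1 + δ) := Real.sqrt_nonneg _
  by_cases h : (supp v).card ≤ K
  · have hsp : Sparse K v := sparse_of_supp h
    have : (0:ℝ) ≤ l1 v / Real.sqrt K := div_nonneg (l1_nonneg v) hsK.le
    calc l2 (A.mulVec v) ≤ Real.sqrt (1 + δ) * l2 v := sparse_bound hδ0 hRIP v hsp
      _ ≤ _ := by nlinarith
  · push_neg at h
    obtain ⟨s, hst, hcards, hmax⟩ :=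
      exists_top (fun i => ‖v i‖) (supp v) K h.le
    set v₀ := res s v with hv₀
    set v' := v - v₀ with hv'
    have hKpos : (0:ℝ) < K := by exact_mod_cast hK
    have hl1v₀ : l1 v₀ = ∑ i ∈ s, ‖v i‖ := l1_res s v
    set M' : ℝ := l1 v₀ / K with hM'
    have hM'0 : 0 ≤ M' := div_nonneg (l1_nonneg _) hKpos.le
    have hMv' : ∀ i, ‖v' i‖ ≤ M' := by
      intro i
      by_cases his : i ∈ s
      · have : v' i = 0 := by simp [hv', hv₀, res, his]
        rw [this, norm_zero]; exact hM'0
      · have hvi : v' i = v i := by simp [hv', hv₀, res, his]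
        rw [hvi]
        by_cases hiv : i ∈ supp v
        · have hle : ∀ j ∈ s, ‖v i‖ ≤ ‖v j‖ := fun j hj => hmax j hj i hiv his
          have : (K:ℝ) * ‖v i‖ ≤ l1 v₀ := by
            rw [hl1v₀]
            calc (K:ℝ) * ‖v i‖ = ∑ _j ∈ s, ‖v i‖ := by
                  rw [Finset.sum_const, hcards, nsmul_eq_mul]
              _ ≤ ∑ j ∈ s, ‖v j‖ := Finset.sum_le_sum hle
          rw [hM', le_div_iff₀ hKpos]; linarith
        · rw [mem_supp, not_not] at hiv
          rw [hiv, norm_zero]; exact hM'0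
    have ihv' := lemD hK hδ0 hRIP (supp v').card v' le_rfl M' hM'0 hMv'
    have hv₀sp : Sparse K v₀ := sparse_res s v hcards.le
    have hb0 : l2 (A.mulVec v₀) ≤ Real.sqrt (1 + δ) * l2 v := by
      calc l2 (A.mulVec v₀) ≤ Real.sqrt (1 + δ) * l2 v₀ := sparse_bound hδ0 hRIP v₀ hv₀sp
        _ ≤ Real.sqrt (1 + δ) * l2 v := by
            have := l2_res_le s v
            nlinarith
    have hsplit : A.mulVec v = A.mulVec v₀ + A.mulVec v' := by
      rw [← Matrix.mulVec_add]
      congr 1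
      funext i
      simp [hv']
    have htri : l2 (A.mulVec v) ≤ l2 (A.mulVec v₀) + l2 (A.mulVec v') := by
      rw [hsplit]; exact l2_add_le _ _
    have hKM' : Real.sqrt K * M' = l1 v₀ / Real.sqrt K := by
      rw [hM', eq_div_iff hsK.ne']
      have hKK : Real.sqrt K * Real.sqrt K = (K:ℝ) := Real.mul_self_sqrt hKpos.le
      field_simp
      linear_combination l1 v₀ * hKK
    have hl1 : l1 v = l1 v₀ + l1 v' := l1_split s v
    calc l2 (A.mulVec v) ≤ l2 (A.mulVec v₀) + l2 (A.mulVec v') := htri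
      _ ≤ Real.sqrt (1 + δ) * l2 v +
            Real.sqrt (1 + δ) * (Real.sqrt K * M' + l1 v' / Real.sqrt K) :=
          add_le_add hb0 ihv'
      _ = Real.sqrt (1 + δ) * (l2 v + l1 v / Real.sqrt K) := by
          rw [hKM', hl1, add_div]; ring

end Core
end RMNB

theorem relative_multiplicative_noise_bound {m n K : ℕ} (hK : 0 < K)
    (A E : Matrix (Fin m) (Fin n) ℂ) (δ εK εA nA : ℝ)
    (hδ0 : 0 ≤ δ) (hδ1 : δ < 1) (hεK : 0 ≤ εK) (hεA : 0 ≤ εA) (hnA : 0 ≤ nA)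
    (hRIP : ∀ v : Fin n → ℂ, Sparse K v →
      (1 - δ) * l2 v ^ 2 ≤ l2 (A.mulVec v) ^ 2 ∧ l2 (A.mulVec v) ^ 2 ≤ (1 + δ) * l2 v ^ 2)
    (hAop : ∀ v : Fin n → ℂ, l2 (A.mulVec v) ≤ nA * l2 v)
    (hEK : ∀ v : Fin n → ℂ, Sparse K v → l2 (E.mulVec v) ≤ εK * Real.sqrt (1 + δ) * l2 v)
    (hEop : ∀ v : Fin n → ℂ, l2 (E.mulVec v) ≤ εA * nA * l2 v)
    (x xK : Fin n → ℂ) (hbest : IsBestKApprox K x xK) (hxK : xK ≠ 0)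
    (hcond : l2 (x - xK) / l2 xK + (l1 (x - xK) / l2 xK) / Real.sqrt K
        < 1 / (Real.sqrt (1 + δ) / Real.sqrt (1 - δ))) :
    l2 (E.mulVec x) / l2 (A.mulVec x) ≤
      (εK * (Real.sqrt (1 + δ) / Real.sqrt (1 - δ)) +
          εA * (nA / Real.sqrt (1 - δ)) * (l2 (x - xK) / l2 xK)) /
        (1 - (Real.sqrt (1 + δ) / Real.sqrt (1 - δ)) *
          (l2 (x - xK) / l2 xK + (l1 (x - xK) / l2 xK) / Real.sqrt K)) := by
  obtain ⟨hxKsp, -, -⟩ := hbest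
  set Δ := x - xK with hΔ
  set c2 := l2 xK with hc2
  set sδm := Real.sqrt (1 - δ) with hsδm
  set sδp := Real.sqrt (1 + δ) with hsδp
  set sK := Real.sqrt K with hsKdef
  have hsδm0 : 0 < sδm := Real.sqrt_pos.mpr (by linarith)
  have hsδp0 : 0 < sδp := Real.sqrt_pos.mpr (by linarith)
  have hsK0 : 0 < sK := Real.sqrt_pos.mpr (by exact_mod_cast hK)
  have hc20 : 0 < c2 := RMNB.l2_pos hxK
  set t := l2 Δ / c2 + (l1 Δ / c2) / sK with ht
  have ht0 : 0 ≤ t := by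
    have := RMNB.l2_nonneg Δ
    have := RMNB.l1_nonneg Δ
    positivity
  have hcond1 : sδp * t < sδm := by
    have h1 : t < sδm / sδp := by
      rw [one_div_div] at hcond; exact hcond
    have := (lt_div_iff₀ hsδp0).mp h1
    linarith [this]
  -- lower bound on l2 (A x)
  have hAxK : sδm * c2 ≤ l2 (A.mulVec xK) := by
    have h := (hRIP xK hxKsp).1
    have h2 : Real.sqrt ((1 - δ) * c2 ^ 2) ≤ Real.sqrt (l2 (A.mulVec xK) ^ 2) :=
      Real.sqrt_le_sqrt h
    rwa [Real.sqrt_mul (by linarith), Real.sqrt_sq hc20.le,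
      Real.sqrt_sq (RMNB.l2_nonneg _)] at h2
  have hAΔ : l2 (A.mulVec Δ) ≤ sδp * (l2 Δ + l1 Δ / sK) :=
    RMNB.lemE hK hδ0 hRIP Δ
  have htri : l2 (A.mulVec xK) ≤ l2 (A.mulVec x) + l2 (A.mulVec Δ) := by
    have he : A.mulVec xK = A.mulVec x + A.mulVec (-Δ) := by
      rw [← Matrix.mulVec_add]
      congr 1
      funext i
      simp [hΔ]
    rw [he]
    calc l2 (A.mulVec x + A.mulVec (-Δ)) ≤ l2 (A.mulVec x) + l2 (A.mulVec (-Δ)) :=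
          RMNB.l2_add_le _ _
      _ = l2 (A.mulVec x) + l2 (A.mulVec Δ) := by
          rw [Matrix.mulVec_neg, RMNB.l2_neg]
  have hAx_low : sδm * c2 - sδp * (l2 Δ + l1 Δ / sK) ≤ l2 (A.mulVec x) := by
    linarith
  have htc2 : l2 Δ + l1 Δ / sK = t * c2 := by
    rw [ht]; field_simp
  have hD : 0 < sδm * c2 - sδp * (l2 Δ + l1 Δ / sK) := by
    rw [htc2]
    have : sδp * (t * c2) < sδm * c2 := by
      rw [← mul_assoc]
      exact mul_lt_mul_of_pos_right hcond1 hc20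
    linarith
  -- upper bound on l2 (E x)
  have hEx : l2 (E.mulVec x) ≤ εK * sδp * c2 + εA * nA * l2 Δ := by
    have he : E.mulVec x = E.mulVec xK + E.mulVec Δ := by
      rw [← Matrix.mulVec_add]
      congr 1
      funext i
      simp [hΔ]
    calc l2 (E.mulVec x) ≤ l2 (E.mulVec xK) + l2 (E.mulVec Δ) := by
          rw [he]; exact RMNB.l2_add_le _ _
      _ ≤ εK * sδp * c2 + εA * nA * l2 Δ :=
          add_le_add (hEK xK hxKsp) (hEop Δ)
  have hN0 : 0 ≤ εK * sδp * c2 + εA * nA * l2 Δ := by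
    have := RMNB.l2_nonneg Δ
    positivity
  have hden2 : (0:ℝ) < 1 - sδp / sδm * t := by
    have : sδp / sδm * t < 1 := by
      rw [div_mul_eq_mul_div, div_lt_one hsδm0]
      exact hcond1
    linarith
  have hD' : sδm * c2 - sδp * (l2 Δ + l1 Δ / sK) ≠ 0 := hD.ne'
  have hden2' : 1 - sδp / sδm * t ≠ 0 := hden2.ne'
  have hsδm' : sδm ≠ 0 := hsδm0.ne'
  have hc2' : c2 ≠ 0 := hc20.ne'
  have hsK' : sK ≠ 0 := hsK0.ne'
  calc l2 (E.mulVec x) / l2 (A.mulVec x)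
      ≤ (εK * sδp * c2 + εA * nA * l2 Δ) /
          (sδm * c2 - sδp * (l2 Δ + l1 Δ / sK)) :=
        div_le_div₀ hN0 hEx hD hAx_low
    _ = (εK * (sδp / sδm) + εA * (nA / sδm) * (l2 Δ / c2)) / (1 - sδp / sδm * t) := by
        rw [div_eq_div_iff hD' hden2', ht]
        field_simp
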